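/- arXiv:2204.13000 — 5 statements merged into one kernel-verified Lean document; each statement's English description precedes it below -/
import Mathlib

section
/- Let X be a compact metric space and f : X → X a continuous map. Then for every integer n ≥ 1, the chain recurrent set of the n-th iterate coincides with that of f: CR(f^n) = CR(f). -/
open Set Filter Topology Function
open scoped ENNReal

/-- A subset of a topological space is an *arc* if it is homeomorphic to `[0,1]`. -/
def IsArc {X : Type*} [TopologicalSpace X] (A : Set X) : Prop :=
  Nonempty (A ≃ₜ Set.Icc (0 : ℝ) 1)

/-- A point `p` is an *endpoint* of the arc `A` if `p ∈ A` and `A \ {p}` is connected. -/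
def IsArcEndpoint {X : Type*} [TopologicalSpace X] (A : Set X) (p : X) : Prop :=
  p ∈ A ∧ IsConnected (A \ {p})

/-- A subset is a *simple closed curve* if it is homeomorphic to the unit circle. -/
def IsSimpleClosedCurve {X : Type*} [TopologicalSpace X] (S : Set X) : Prop :=
  Nonempty (S ≃ₜ Metric.sphere (0 : ℂ) 1)

/-- A *tree* is a compact connected metric space which is a union of finitely many arcs,
any two of which are disjoint or intersect only in (one or both of) their endpoints,
and which contains no simple closed curve. -/
def IsTree (X : Type*) [MetricSpace X] : Prop :=
  CompactSpace X ∧ ConnectedSpace X ∧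
    (∃ 𝒜 : Finset (Set X), (∀ A ∈ 𝒜, IsArc A) ∧ ⋃₀ (𝒜 : Set (Set X)) = Set.univ ∧
      ∀ A ∈ 𝒜, ∀ B ∈ 𝒜, A ≠ B → ∀ p ∈ A ∩ B, IsArcEndpoint A p ∧ IsArcEndpoint B p) ∧
    ∀ S : Set X, ¬ IsSimpleClosedCurve S

/-- A *dendrite* is a locally connected continuum containing no simple closed curve. -/
def IsDendrite (X : Type*) [MetricSpace X] : Prop :=
  CompactSpace X ∧ ConnectedSpace X ∧ LocallyConnectedSpace X ∧
    ∀ S : Set X, ¬ IsSimpleClosedCurve S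

/-- `𝒰` is a finite open cover of the subset `Y`. -/
def IsOpenCoverOn {X : Type*} [TopologicalSpace X] (Y : Set X) (𝒰 : Finset (Set X)) : Prop :=
  (∀ U ∈ 𝒰, IsOpen U) ∧ Y ⊆ ⋃₀ (𝒰 : Set (Set X))

/-- `N(⋁_{i=1}^n f^{-a_i}(𝒰))`, relative to the subset `Y`: the minimal number `m` of elements
of the join cover `⋁_{i=1}^n f^{-a_i}(𝒰)` needed to cover `Y`. -/
noncomputable def seqCoverCountOn {X : Type*} (f : X → X) (Y : Set X) (a : ℕ → ℕ)
    (𝒰 : Finset (Set X)) (n : ℕ) : ℕ :=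
  sInf { m | ∃ c : Fin m → Fin n → Set X, (∀ j i, c j i ∈ 𝒰) ∧
    Y ⊆ ⋃ j, ⋂ i, f^[a i.1] ⁻¹' c j i }

/-- Topological sequence entropy of `f` restricted to the (invariant) subset `Y`,
with respect to the sequence `a`. -/
noncomputable def seqEntropyOn {X : Type*} [TopologicalSpace X] (f : X → X) (Y : Set X)
    (a : ℕ → ℕ) : ℝ≥0∞ :=
  ⨆ (𝒰 : Finset (Set X)) (_ : IsOpenCoverOn Y 𝒰),
    Filter.limsup
      (fun n : ℕ => ENNReal.ofReal (Real.log (seqCoverCountOn f Y a 𝒰 n) / n)) Filter.atTop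

/-- Topological sequence entropy of `f : X → X` with respect to the sequence `a`. -/
noncomputable def seqEntropy {X : Type*} [TopologicalSpace X] (f : X → X) (a : ℕ → ℕ) : ℝ≥0∞ :=
  seqEntropyOn f Set.univ a

/-- The ordinary topological entropy `h(f)`, i.e. the sequence entropy for `A = (0,1,2,…)`. -/
noncomputable def topEntropy {X : Type*} [TopologicalSpace X] (f : X → X) : ℝ≥0∞ :=
  seqEntropy f id

/-- `h_∞(f|_Y)`: the supremum over all strictly increasing sequences of positive integers of
the topological sequence entropies of `f` restricted to `Y`. -/
noncomputable def supSeqEntropyOn {X : Type*} [TopologicalSpace X] (f : X → X) (Y : Set X) :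
    ℝ≥0∞ :=
  ⨆ (a : ℕ → ℕ) (_ : StrictMono a) (_ : 1 ≤ a 0), seqEntropyOn f Y a

/-- `h_∞(f)`: the supremum of the topological sequence entropies of `f`. -/
noncomputable def supSeqEntropy {X : Type*} [TopologicalSpace X] (f : X → X) : ℝ≥0∞ :=
  supSeqEntropyOn f Set.univ

/-- The ω-limit set `ω_f(x) = ⋂_n closure {f^k(x) : k ≥ n}`. -/
def omegaLimitSet {X : Type*} [TopologicalSpace X] (f : X → X) (x : X) : Set X :=
  ⋂ n : ℕ, closure ((fun k => f^[k] x) '' Set.Ici n)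

/-- `ω(f) = ⋃_x ω_f(x)`. -/
def omegaSet {X : Type*} [TopologicalSpace X] (f : X → X) : Set X :=
  ⋃ x : X, omegaLimitSet f x

/-- The non-wandering set `Ω(f)`. -/
def nonWanderingSet {X : Type*} [TopologicalSpace X] (f : X → X) : Set X :=
  { x | ∀ U : Set X, IsOpen U → x ∈ U → ∃ n, 1 ≤ n ∧ (f^[n] ⁻¹' U ∩ U).Nonempty }

/-- There is an ε-chain from `x` to `y` under `f`. -/
def EpsChain {X : Type*} [MetricSpace X] (f : X → X) (ε : ℝ) (x y : X) : Prop :=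
  ∃ n, 1 ≤ n ∧ ∃ c : ℕ → X, c 0 = x ∧ c n = y ∧ ∀ i < n, dist (f (c i)) (c (i + 1)) < ε

/-- The chain recurrent set `CR(f)`. -/
def chainRecurrentSet {X : Type*} [MetricSpace X] (f : X → X) : Set X :=
  { x | ∀ ε > 0, EpsChain f ε x x }

/-- The chain recurrent set of the restriction `f|_Y`: chain recurrence witnessed by
ε-chains lying entirely inside `Y`. -/
def chainRecurrentSetOn {X : Type*} [MetricSpace X] (f : X → X) (Y : Set X) : Set X :=
  { x ∈ Y | ∀ ε > 0, ∃ n, 1 ≤ n ∧ ∃ c : ℕ → X, c 0 = x ∧ c n = x ∧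
      (∀ i ≤ n, c i ∈ Y) ∧ ∀ i < n, dist (f (c i)) (c (i + 1)) < ε }

/-- `I` is a periodic arc of `f` of period `s`: an arc with `f^s(I) ⊆ I` whose iterates
`I, f(I), …, f^{s-1}(I)` are pairwise disjoint. -/
def IsPeriodicArc {X : Type*} [TopologicalSpace X] (f : X → X) (I : Set X) (s : ℕ) : Prop :=
  IsArc I ∧ 1 ≤ s ∧ Set.MapsTo f^[s] I I ∧
    ∀ i j, i < j → j < s → Disjoint (f^[i] '' I) (f^[j] '' I)

/-- `Orb_f(I) = I ∪ f(I) ∪ … ∪ f^{s-1}(I)`. -/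
def arcOrbit {X : Type*} (f : X → X) (I : Set X) (s : ℕ) : Set X :=
  ⋃ i ∈ Finset.range s, f^[i] '' I

/-- `I` is an independence set for the pair `(U, V)` under `f`. -/
def IsIndepSetPair {X : Type*} (f : X → X) (U V : Set X) (I : Finset ℕ) : Prop :=
  ∀ J ⊆ I, J.Nonempty → ∀ s : ℕ → Bool,
    (⋂ j ∈ J, f^[j] ⁻¹' (if s j then U else V)).Nonempty

/-- `(x, y)` is an IN-pair of `(X, f)`. -/
def INPair {X : Type*} [TopologicalSpace X] (f : X → X) (x y : X) : Prop :=
  ∀ U ∈ nhds x, ∀ V ∈ nhds y, ∀ m : ℕ, ∃ I : Finset ℕ, m ≤ I.card ∧ IsIndepSetPair f U V I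

/-- The set `IN(X, f)` of IN-pairs of `(X, f)`. -/
def INPairs {X : Type*} [TopologicalSpace X] (f : X → X) : Set (X × X) :=
  { p | INPair f p.1 p.2 }

/-- `(x, y)` is an IN-pair of the restricted (sub)system `(Y, f|_Y)`, for `Y` invariant. -/
def INPairOn {X : Type*} [TopologicalSpace X] (f : X → X) (Y : Set X) (x y : X) : Prop :=
  x ∈ Y ∧ y ∈ Y ∧ ∀ U ∈ nhds x, ∀ V ∈ nhds y, ∀ m : ℕ, ∃ I : Finset ℕ, m ≤ I.card ∧
    ∀ J ⊆ I, J.Nonempty → ∀ s : ℕ → Bool,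
      (Y ∩ ⋂ j ∈ J, f^[j] ⁻¹' (if s j then U else V)).Nonempty

/-- `(x, y)` is a Li–Yorke pair for `f`. -/
def LiYorkePair {X : Type*} [MetricSpace X] (f : X → X) (x y : X) : Prop :=
  Filter.liminf (fun n : ℕ => dist (f^[n] x) (f^[n] y)) Filter.atTop = 0 ∧
    0 < Filter.limsup (fun n : ℕ => dist (f^[n] x) (f^[n] y)) Filter.atTop

/-- Auxiliary: existence of a δ-chain of length `n` from `x` to `y`. -/
def ChainAux {X : Type*} [MetricSpace X] (f : X → X) (δ : ℝ) (x y : X) (n : ℕ) : Prop :=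
  ∃ c : ℕ → X, c 0 = x ∧ c n = y ∧ ∀ i < n, dist (f (c i)) (c (i + 1)) < δ

lemma ChainAux.concat {X : Type*} [MetricSpace X] {f : X → X} {δ : ℝ} {x y z : X} {p q : ℕ}
    (h1 : ChainAux f δ x y p) (h2 : ChainAux f δ y z q) : ChainAux f δ x z (p + q) := by
  obtain ⟨c1, hc10, hc1p, hc1s⟩ := h1
  obtain ⟨c2, hc20, hc2q, hc2s⟩ := h2
  refine ⟨fun i => if i < p then c1 i else c2 (i - p), ?_, ?_, ?_⟩
  · by_cases h : 0 < p
    · simp [h, hc10]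
    · have hp : p = 0 := by omega
      simp only [hp, Nat.sub_zero, hc20, if_neg (lt_irrefl 0)]
      rw [← hc10, ← hc1p, hp]
  · by_cases h : p + q < p
    · omega
    · simp only [if_neg h, Nat.add_sub_cancel_left, hc2q]
  · intro i hi
    by_cases h : i < p
    · by_cases h' : i + 1 < p
      · simpa [h, h'] using hc1s i h
      · have : i + 1 = p := by omega
        have : c2 (i + 1 - p) = c1 (i + 1) := by
          rw [this]; simp [hc1p, hc20]
        simp only [if_pos h, if_neg h']
        rw [this]; exact hc1s i h
    · have h' : ¬ i + 1 < p := by omega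
      have : i + 1 - p = (i - p) + 1 := by omega
      simpa [h, h', this] using hc2s (i - p) (by omega)

lemma ChainAux.repeat {X : Type*} [MetricSpace X] {f : X → X} {δ : ℝ} {x : X} {m : ℕ}
    (h : ChainAux f δ x x m) : ∀ k : ℕ, ChainAux f δ x x (k * m) := by
  intro k
  induction k with
  | zero => exact ⟨fun _ => x, rfl, rfl, fun i hi => by omega⟩
  | succ k ih => simpa [Nat.succ_mul] using ih.concat h

/-- Error propagation lemma: on a compact space, for every `ε > 0` there is `δ > 0` such that
every δ-chain of length `n` from `a` ends within `ε` of `f^[n] a`. -/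
lemma block_lemma {X : Type*} [MetricSpace X] [CompactSpace X] (f : X → X) (hf : Continuous f) :
    ∀ n : ℕ, ∀ ε : ℝ, 0 < ε → ∃ δ > 0, ∀ c : ℕ → X,
      (∀ i < n, dist (f (c i)) (c (i + 1)) < δ) → dist (f^[n] (c 0)) (c n) < ε := by
  intro n
  induction n with
  | zero => exact fun ε hε => ⟨ε, hε, fun c _ => by simpa using hε⟩
  | succ n ih =>
    intro ε hε
    have huc : UniformContinuous f := CompactSpace.uniformContinuous_of_continuous hf
    obtain ⟨η, hη, hη'⟩ := Metric.uniformContinuous_iff.mp huc (ε / 2) (by linarith)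
    obtain ⟨δ, hδ, hδ'⟩ := ih η hη
    refine ⟨min δ (ε / 2), by positivity, fun c hc => ?_⟩
    have h1 : dist (f^[n] (c 0)) (c n) < η :=
      hδ' c fun i hi => lt_of_lt_of_le (hc i (by omega)) (min_le_left _ _)
    have h2 : dist (f (f^[n] (c 0))) (f (c n)) < ε / 2 := hη' h1
    have h3 : dist (f (c n)) (c (n + 1)) < ε / 2 :=
      lt_of_lt_of_le (hc n (by omega)) (min_le_right _ _)
    calc dist (f^[n + 1] (c 0)) (c (n + 1))
        = dist (f (f^[n] (c 0))) (c (n + 1)) := by rw [Function.iterate_succ_apply']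
      _ ≤ dist (f (f^[n] (c 0))) (f (c n)) + dist (f (c n)) (c (n + 1)) := dist_triangle _ _ _
      _ < ε / 2 + ε / 2 := by linarith
      _ = ε := by ring

/-- For every `n ≥ 1`, `CR(f^n) = CR(f)`. -/
theorem chainRecurrentSet_iterate {X : Type*} [MetricSpace X] [CompactSpace X]
    (f : X → X) (hf : Continuous f) :
    ∀ n : ℕ, 1 ≤ n → chainRecurrentSet f^[n] = chainRecurrentSet f := by
  intro n hn
  ext x
  constructor
  · -- CR(f^n) ⊆ CR(f): expand each ε-step of the f^n-chain into n steps of f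
    intro hx ε hε
    obtain ⟨m, hm, c, hc0, hcm, hcs⟩ := hx ε hε
    -- chain of length i*n from x to c i, for each i ≤ m
    have key : ∀ i ≤ m, ChainAux f ε x (c i) (i * n) := by
      intro i hi
      induction i with
      | zero => exact ⟨fun _ => x, rfl, by simp [hc0], fun j hj => by omega⟩
      | succ i ih =>
        have seg : ChainAux f ε (c i) (c (i + 1)) n := ?_
        · have := (ih (by omega)).concat seg
          simpa [Nat.succ_mul] using this
        -- segment from c i to c (i+1) of length n
        refine ⟨fun k => if k < n then f^[k] (c i) else c (i + 1),
          by simp only [if_pos (by omega : 0 < n), Function.iterate_zero_apply], by simp, ?_⟩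
        intro k hk
        by_cases h' : k + 1 < n
        · simp only [if_pos hk, if_pos h']
          rw [Function.iterate_succ_apply']
          simpa using hε
        · have hkn : k + 1 = n := by omega
          simp only [if_pos hk, if_neg h']
          have : f (f^[k] (c i)) = f^[n] (c i) := by
            rw [← hkn]; exact (Function.iterate_succ_apply' f k (c i)).symm
          rw [this]
          exact hcs i (by omega)
    obtain ⟨C, hC0, hCe, hCs⟩ := key m le_rfl
    exact ⟨m * n, by nlinarith, C, hC0, by rwa [hcm] at hCe, hCs⟩
  · -- CR(f) ⊆ CR(f^n): take δ from the block lemma, repeat the δ-chain n times,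
    -- and sample every n-th point
    intro hx ε hε
    obtain ⟨δ, hδ, hδ'⟩ := block_lemma f hf n ε hε
    obtain ⟨m, hm, c, hc0, hcm, hcs⟩ := hx δ hδ
    have hrep : ChainAux f δ x x (n * m) := ChainAux.repeat ⟨c, hc0, hcm, hcs⟩ n
    obtain ⟨C, hC0, hCe, hCs⟩ := hrep
    refine ⟨m, hm, fun j => C (j * n), by simpa using hC0, ?_, ?_⟩
    · show C (m * n) = x
      rw [Nat.mul_comm m n]; exact hCe
    · intro j hj
      have := hδ' (fun i => C (j * n + i)) (fun i hi => by
        have hlt : j * n + i < n * m := by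
          calc j * n + i < j * n + n := by omega
            _ = (j + 1) * n := by ring
            _ ≤ m * n := Nat.mul_le_mul_right n (by omega)
            _ = n * m := Nat.mul_comm m n
        simpa [Nat.add_assoc] using hCs (j * n + i) hlt)
      simpa [Nat.add_mul, Nat.add_comm] using this
end

section
/- Let X be a compact metric space and f : X → X a continuous map, and let g = f|_{CR(f)} be the restriction of f to its chain recurrent set (which is a closed invariant set, with the induced metric). Then the chain recurrent set of g equals that of f: CR(g) = CR(f). -/
open Set Filter Topology Function
open scoped ENNReal

lemma epsChain_trans {X : Type*} [MetricSpace X] {f : X → X} {ε : ℝ} {x y z : X}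
    (h1 : EpsChain f ε x y) (h2 : EpsChain f ε y z) : EpsChain f ε x z := by
  obtain ⟨m, hm, c, hc0, hcm, hc⟩ := h1
  obtain ⟨k, hk, d, hd0, hdk, hd⟩ := h2
  refine ⟨m + k, by omega, fun i => if i ≤ m then c i else d (i - m), by simp [hc0], ?_, ?_⟩
  · have : ¬ (m + k ≤ m) := by omega
    simp only [this, if_false]
    simpa using hdk
  · intro i hi
    by_cases h1' : i + 1 ≤ m
    · have hi' : i ≤ m := by omega
      simp only [hi', h1', if_true]
      exact hc i (by omega)
    · by_cases h2' : i ≤ m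
      · have him : i = m := by omega
        subst him
        simp only [le_refl, if_true, h1', if_false]
        rw [hcm, ← hd0, (by omega : i + 1 - i = 1)]
        exact hd 0 (by omega)
      · simp only [h2', h1', if_false]
        have : i + 1 - m = (i - m) + 1 := by omega
        rw [this]
        exact hd (i - m) (by omega)

/-- If `g = f|_{CR(f)}`, then `CR(g) = CR(f)`. -/
theorem chainRecurrentSet_restriction {X : Type*} [MetricSpace X] [CompactSpace X]
    (f : X → X) (hf : Continuous f) :
    chainRecurrentSetOn f (chainRecurrentSet f) = chainRecurrentSet f := by
  ext x
  constructor
  · rintro ⟨hxY, h⟩ ε hε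
    obtain ⟨n, hn, c, h0, hn', _, hjump⟩ := h ε hε
    exact ⟨n, hn, c, h0, hn', hjump⟩
  · intro hx
    refine ⟨hx, ?_⟩
    intro ε hε
    -- the chain class of `x`
    set C : Set X := {y | ∀ δ > 0, EpsChain f δ x y ∧ EpsChain f δ y x} with hC
    have hxC : x ∈ C := fun δ hδ => ⟨hx δ hδ, hx δ hδ⟩
    have hCsub : C ⊆ chainRecurrentSet f := fun y hy δ hδ =>
      epsChain_trans (hy δ hδ).2 (hy δ hδ).1
    -- uniform continuity
    have huc : UniformContinuous f := CompactSpace.uniformContinuous_of_continuous hf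
    obtain ⟨η₀, hη₀, hucf⟩ := Metric.uniformContinuous_iff.mp huc (ε/3) (by positivity)
    set η : ℝ := min η₀ (ε/6) with hηdef
    have hη : 0 < η := lt_min hη₀ (by positivity)
    have hηε : η ≤ ε/6 := min_le_right _ _
    have hηf : ∀ a b : X, dist a b < η → dist (f a) (f b) < ε/3 := fun a b h =>
      hucf (lt_of_lt_of_le h (min_le_left _ _))
    -- key claim: fine enough chains from x to x stay η-close to C
    have claim : ∃ δ > 0, ∀ (n : ℕ) (c : ℕ → X), 1 ≤ n → c 0 = x → c n = x →
        (∀ i < n, dist (f (c i)) (c (i+1)) < δ) → ∀ i ≤ n, ∃ q ∈ C, dist (c i) q < η := by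
      by_contra hcon
      push_neg at hcon
      have H : ∀ k : ℕ, ∃ p : X, (∀ q ∈ C, η ≤ dist p q) ∧
          ∃ (n : ℕ) (c : ℕ → X) (i : ℕ), 1 ≤ i ∧ i < n ∧ c 0 = x ∧ c n = x ∧
            (∀ m < n, dist (f (c m)) (c (m+1)) < 1/(k+1)) ∧ c i = p := by
        intro k
        obtain ⟨n, c, hn, h0, hN, hjump, i, hin, hfar⟩ :=
          hcon (1/(k+1)) (by positivity)
        have hi0 : i ≠ 0 := by
          rintro rfl
          have := hfar x hxC
          rw [h0] at this
          simp at this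
          exact absurd this (not_le.mpr hη)
        have hiN : i ≠ n := by
          rintro rfl
          have := hfar x hxC
          rw [hN] at this
          simp at this
          exact absurd this (not_le.mpr hη)
        exact ⟨c i, hfar, n, c, i, by omega, by omega, h0, hN, hjump, rfl⟩
      choose p hp hchain using H
      obtain ⟨L, -, φ, hφ, htend⟩ :=
        IsCompact.tendsto_subseq (x := p) isCompact_univ (fun k => mem_univ (p k))
      have hLC : L ∈ C := by
        intro δ hδ
        obtain ⟨r, hr, hcont⟩ := Metric.continuous_iff.mp hf L (δ/2) (by positivity)
        obtain ⟨N, hNd⟩ := Metric.tendsto_atTop.mp htend (min r (δ/2))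
          (lt_min hr (by positivity))
        obtain ⟨J₀, hJ₀⟩ := exists_nat_one_div_lt (show (0:ℝ) < δ/2 by positivity)
        set j := max N J₀ with hj
        have hdist : dist (p (φ j)) L < min r (δ/2) := by
          have := hNd j (le_max_left _ _)
          simpa [dist_comm] using this
        have hfrac : 1/((φ j : ℝ)+1) < δ/2 := by
          have h1 : (1:ℝ)/((φ j : ℝ)+1) ≤ 1/((j:ℝ)+1) := by
            apply one_div_le_one_div_of_le (by positivity)
            have hji : j ≤ φ j := hφ.le_apply
            have := (Nat.cast_le (α := ℝ)).mpr hji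
            linarith
          have h2 : (1:ℝ)/((j:ℝ)+1) ≤ 1/((J₀:ℝ)+1) := by
            apply one_div_le_one_div_of_le (by positivity)
            have hji : J₀ ≤ j := le_max_right _ _
            have := (Nat.cast_le (α := ℝ)).mpr hji
            linarith
          linarith
        obtain ⟨n, c, i, hi1, hiN, h0, hN', hjump, hci⟩ := hchain (φ j)
        constructor
        · -- δ-chain from x to L
          refine ⟨i, hi1, fun m => if m = i then L else c m, ?_, by simp, ?_⟩
          · have : (0:ℕ) ≠ i := by omega
            simp [this, h0]
          · intro m hm
            have hmne : m ≠ i := by omega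
            simp only [hmne, if_false]
            by_cases hm1 : m + 1 = i
            · simp only [hm1, if_true]
              calc dist (f (c m)) L ≤ dist (f (c m)) (c (m+1)) + dist (c (m+1)) L :=
                    dist_triangle _ _ _
                _ < 1/((φ j : ℝ)+1) + δ/2 := by
                    apply add_lt_add (hjump m (by omega))
                    rw [hm1, hci]
                    exact lt_of_lt_of_le hdist (min_le_right _ _)
                _ < δ/2 + δ/2 := by linarith
                _ = δ := by ring
            · simp only [hm1, if_false]
              calc dist (f (c m)) (c (m+1)) < 1/((φ j : ℝ)+1) := hjump m (by omega)
                _ < δ/2 := hfrac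
                _ < δ := by linarith
        · -- δ-chain from L to x
          refine ⟨n - i, by omega, fun m => if m = 0 then L else c (i + m), by simp, ?_, ?_⟩
          · have h1 : n - i ≠ 0 := by omega
            have h2 : i + (n - i) = n := by omega
            simp [h1, h2, hN']
          · intro m hm
            by_cases hm0 : m = 0
            · subst hm0
              have h1 : (1:ℕ) ≠ 0 := one_ne_zero
              simp only [if_true, h1, if_false]
              have hfc : dist (f L) (f (c i)) < δ/2 := by
                rw [dist_comm]
                apply hcont
                rw [hci]
                exact lt_of_lt_of_le hdist (min_le_left _ _)
              calc dist (f L) (c (i + 1)) ≤ dist (f L) (f (c i)) + dist (f (c i)) (c (i+1)) :=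
                    dist_triangle _ _ _
                _ < δ/2 + 1/((φ j : ℝ)+1) := add_lt_add hfc (hjump i (by omega))
                _ < δ/2 + δ/2 := by linarith
                _ = δ := by ring
            · have hm1 : m + 1 ≠ 0 := by omega
              simp only [hm0, hm1, if_false]
              have : i + (m + 1) = (i + m) + 1 := by omega
              rw [this]
              calc dist (f (c (i + m))) (c (i + m + 1)) < 1/((φ j : ℝ)+1) :=
                    hjump (i + m) (by omega)
                _ < δ/2 := hfrac
                _ < δ := by linarith
      -- contradiction: p (φ j) → L ∈ C but stays η-far from C
      obtain ⟨N, hNd⟩ := Metric.tendsto_atTop.mp htend η hη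
      have hd' : dist (p (φ N)) L < η := by
        have := hNd N le_rfl
        simpa [dist_comm] using this
      exact absurd (hp (φ N) L hLC) (not_le.mpr hd')
    obtain ⟨δ, hδ, hδclaim⟩ := claim
    -- take a fine chain from x to x and push it into C
    set δ' : ℝ := min δ (ε/6) with hδ'def
    have hδ'pos : 0 < δ' := lt_min hδ (by positivity)
    obtain ⟨n, hn1, c, hc0, hcn, hjump⟩ := hx δ' hδ'pos
    have hjumpδ : ∀ i < n, dist (f (c i)) (c (i+1)) < δ := fun i hi =>
      lt_of_lt_of_le (hjump i hi) (min_le_left _ _)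
    have hnear := hδclaim n c hn1 hc0 hcn hjumpδ
    have Hq : ∀ i, ∃ q, q ∈ C ∧ (i ≤ n → dist (c i) q < η) ∧ (i = 0 → q = x) ∧
        (i = n → q = x) := by
      intro i
      by_cases h0 : i = 0
      · exact ⟨x, hxC, fun _ => by simp [h0, hc0, hη], fun _ => rfl, fun _ => rfl⟩
      by_cases hN : i = n
      · exact ⟨x, hxC, fun _ => by simp [hN, hcn, hη], fun _ => rfl, fun _ => rfl⟩
      by_cases hin : i ≤ n
      · obtain ⟨q, hq, hqd⟩ := hnear i hin
        exact ⟨q, hq, fun _ => hqd, fun h => absurd h h0, fun h => absurd h hN⟩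
      · exact ⟨x, hxC, fun h => absurd h hin, fun h => absurd h h0, fun h => absurd h hN⟩
    choose q hqC hqd hq0 hqn using Hq
    refine ⟨n, hn1, q, hq0 0 rfl, hqn n rfl, fun i _ => hCsub (hqC i), ?_⟩
    intro i hi
    have h1 : dist (f (q i)) (f (c i)) < ε/3 := by
      apply hηf
      rw [dist_comm]
      exact hqd i (by omega)
    have h2 : dist (f (c i)) (c (i+1)) < ε/6 :=
      lt_of_lt_of_le (hjump i hi) (min_le_right _ _)
    have h3 : dist (c (i+1)) (q (i+1)) < η := hqd (i+1) (by omega)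
    calc dist (f (q i)) (q (i+1))
        ≤ dist (f (q i)) (f (c i)) + dist (f (c i)) (c (i+1)) + dist (c (i+1)) (q (i+1)) :=
          dist_triangle4 _ _ _ _
      _ < ε/3 + ε/6 + ε/6 := by
          have := lt_of_lt_of_le h3 hηε
          linarith
      _ < ε := by linarith
end

section
/- Let (X,f) be a dynamical system on a compact metric space. Then for every integer k ≥ 1 the set of IN-pairs of f coincides with the set of IN-pairs of f^k, IN(X,f) = IN(X,f^k), and moreover IN(X,f) is a closed subset of X × X. -/
open Set Filter Topology Function
open scoped ENNReal

/-- Monotonicity of independence sets in the target sets. -/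
lemma isIndepSetPair_mono {X : Type*} {f : X → X} {U V U' V' : Set X} {I : Finset ℕ}
    (h : IsIndepSetPair f U' V' I) (hU : U' ⊆ U) (hV : V' ⊆ V) :
    IsIndepSetPair f U V I := by
  intro J hJ hJne s
  obtain ⟨x, hx⟩ := h J hJ hJne s
  refine ⟨x, ?_⟩
  simp only [Set.mem_iInter, Set.mem_preimage] at hx ⊢
  intro j hj
  have hx' := hx j hj
  by_cases hs : s j <;> simp only [hs, if_true, if_false] at hx' ⊢
  · exact hU hx'
  · exact hV hx'

/-- `IN(X,f) = IN(X,f^k)` for every `k ≥ 1`, and `IN(X,f)` is closed. -/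
theorem INPairs_iterate_and_closed {X : Type*} [MetricSpace X] [CompactSpace X]
    (f : X → X) (hf : Continuous f) :
    (∀ k : ℕ, 1 ≤ k → INPairs f = INPairs f^[k]) ∧ IsClosed (INPairs f) := by
  constructor
  · intro k hk
    have hk0 : 0 < k := hk
    ext ⟨x, y⟩
    simp only [INPairs, Set.mem_setOf_eq]
    constructor
    · -- IN-pair of f → IN-pair of f^[k]
      intro h U hU V hV m
      obtain ⟨I, hIcard, hI⟩ := h U hU V hV (k * m)
      have hmaps : ∀ j ∈ I, j % k ∈ Finset.range k :=
        fun j _ => Finset.mem_range.2 (Nat.mod_lt _ hk0)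
      have hcard : (Finset.range k).card * m ≤ I.card := by
        simpa [Finset.card_range] using hIcard
      obtain ⟨r, -, hrcard⟩ :=
        Finset.exists_le_card_fiber_of_mul_le_card_of_maps_to hmaps
          ⟨0, Finset.mem_range.2 hk0⟩ hcard
      set F := I.filter (fun j => j % k = r) with hF
      have hFmod : ∀ j ∈ F, j % k = r := fun j hj => (Finset.mem_filter.1 hj).2
      have hFI : ∀ j ∈ F, j ∈ I := fun j hj => (Finset.mem_filter.1 hj).1
      have hinj : Set.InjOn (fun j => j / k) (F : Set ℕ) := by
        intro a ha b hb hab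
        have ha' := hFmod a ha
        have hb' := hFmod b hb
        have hab' : a / k = b / k := hab
        calc a = k * (a / k) + a % k := (Nat.div_add_mod a k).symm
          _ = k * (b / k) + b % k := by rw [hab', ha', hb']
          _ = b := Nat.div_add_mod b k
      refine ⟨F.image (fun j => j / k), ?_, ?_⟩
      · rw [Finset.card_image_of_injOn hinj]; exact hrcard
      · intro J' hJ' hJ'ne s'
        have hqI : ∀ q ∈ J', k * q + r ∈ I := by
          intro q hq
          obtain ⟨j, hjF, hjq⟩ := Finset.mem_image.1 (hJ' hq)
          have : k * q + r = j := by
            rw [← hjq, ← hFmod j hjF]; exact Nat.div_add_mod j k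
          rw [this]; exact hFI j hjF
        have hJI : J'.image (fun q => k * q + r) ⊆ I := by
          intro j hj
          obtain ⟨q, hq, rfl⟩ := Finset.mem_image.1 hj
          exact hqI q hq
        obtain ⟨x0, hx0⟩ := hI (J'.image (fun q => k * q + r)) hJI
          (hJ'ne.image _) (fun j => s' ((j - r) / k))
        refine ⟨f^[r] x0, ?_⟩
        simp only [Set.mem_iInter, Set.mem_preimage] at hx0 ⊢
        intro q hq
        have hmem : k * q + r ∈ J'.image (fun q => k * q + r) :=
          Finset.mem_image_of_mem _ hq
        have hx0' := hx0 _ hmem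
        have hdiv : (k * q + r - r) / k = q := by
          simp [Nat.mul_div_cancel_left _ hk0]
        rw [hdiv] at hx0'
        have hiter : (f^[k])^[q] (f^[r] x0) = f^[k * q + r] x0 := by
          rw [← Function.iterate_mul, ← Function.iterate_add_apply]
        rw [hiter]
        exact hx0'
    · -- IN-pair of f^[k] → IN-pair of f
      intro h U hU V hV m
      obtain ⟨I, hIcard, hI⟩ := h U hU V hV m
      have hinj : Set.InjOn (fun q => k * q) (I : Set ℕ) := by
        intro a _ b _ hab
        exact Nat.eq_of_mul_eq_mul_left hk0 hab
      refine ⟨I.image (fun q => k * q), ?_, ?_⟩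
      · rw [Finset.card_image_of_injOn hinj]; exact hIcard
      · intro J hJ hJne s
        have hJ0 : J.image (fun j => j / k) ⊆ I := by
          intro q hq
          obtain ⟨j, hjJ, rfl⟩ := Finset.mem_image.1 hq
          obtain ⟨i, hiI, rfl⟩ := Finset.mem_image.1 (hJ hjJ)
          simpa [Nat.mul_div_cancel_left _ hk0] using hiI
        obtain ⟨x0, hx0⟩ := hI (J.image (fun j => j / k)) hJ0
          (hJne.image _) (fun q => s (k * q))
        refine ⟨x0, ?_⟩
        simp only [Set.mem_iInter, Set.mem_preimage] at hx0 ⊢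
        intro j hj
        obtain ⟨i, hiI, rfl⟩ := Finset.mem_image.1 (hJ hj)
        have hmem : k * i / k ∈ J.image (fun j => j / k) :=
          Finset.mem_image_of_mem _ hj
        have hx0' := hx0 _ hmem
        have hdiv : k * i / k = i := Nat.mul_div_cancel_left _ hk0
        rw [hdiv] at hx0'
        have hiter : (f^[k])^[i] x0 = f^[k * i] x0 := by
          rw [← Function.iterate_mul]
        rw [hiter] at hx0'
        exact hx0'
  · -- closedness
    rw [← isOpen_compl_iff, isOpen_iff_mem_nhds]
    rintro ⟨x, y⟩ hxy
    simp only [Set.mem_compl_iff, INPairs, Set.mem_setOf_eq, INPair] at hxy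
    push_neg at hxy
    obtain ⟨U, hU, V, hV, m, hm⟩ := hxy
    have hnhds : interior U ×ˢ interior V ∈ nhds (x, y) :=
      prod_mem_nhds (interior_mem_nhds.2 hU) (interior_mem_nhds.2 hV)
    refine Filter.mem_of_superset hnhds ?_
    rintro ⟨x', y'⟩ ⟨hx', hy'⟩ hmem
    simp only [INPairs, Set.mem_setOf_eq] at hmem
    obtain ⟨I, hIcard, hI⟩ := hmem (interior U) (isOpen_interior.mem_nhds hx')
      (interior V) (isOpen_interior.mem_nhds hy') m
    exact hm I hIcard (isIndepSetPair_mono hI interior_subset interior_subset)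
end

section
/- Let (X,f) and (Y,g) be dynamical systems on compact metric spaces with (Y,g) a factor of (X,f) through a factor map π : X → Y. If (x,y) is an IN-pair of (X,f), then (π(x), π(y)) is an IN-pair of (Y,g). -/
open Set Filter Topology Function
open scoped ENNReal

/-- A factor map sends IN-pairs to IN-pairs. -/
theorem factor_map_INPair {X Y : Type*} [MetricSpace X] [CompactSpace X]
    [MetricSpace Y] [CompactSpace Y] (f : X → X) (g : Y → Y) (π : X → Y)
    (hf : Continuous f) (hg : Continuous g) (hπ : Continuous π)
    (hsurj : Function.Surjective π) (hcomm : π ∘ f = g ∘ π)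
    {x y : X} (hxy : INPair f x y) :
    INPair g (π x) (π y) := by
  have hsemi : ∀ n (z : X), π (f^[n] z) = g^[n] (π z) := by
    intro n
    induction n with
    | zero => intro z; simp
    | succ n ih =>
      intro z
      rw [Function.iterate_succ_apply, Function.iterate_succ_apply, ih,
        ← Function.comp_apply (f := π) (g := f), hcomm]
      rfl
  intro U hU V hV m
  obtain ⟨I, hI, hind⟩ := hxy (π ⁻¹' U) (hπ.continuousAt.preimage_mem_nhds hU)
    (π ⁻¹' V) (hπ.continuousAt.preimage_mem_nhds hV) m
  refine ⟨I, hI, fun J hJ hJne s => ?_⟩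
  obtain ⟨z, hz⟩ := hind J hJ hJne s
  refine ⟨π z, ?_⟩
  simp only [Set.mem_iInter, Set.mem_preimage] at hz ⊢
  intro j hj
  rw [← hsemi]
  have := hz j hj
  split at this <;> simp_all
end

section
/- There exist a compact metric space Y (realizable as a compact subset of ℝ²) and a homeomorphism g : Y → Y such that every point of Y is periodic under g (hence (Y,g) is a distal system) and yet h_∞(g) > 0. -/
open Set Filter Topology Function
open scoped ENNReal

open scoped Real

noncomputable section SEaux

namespace SEaux

/-- real pair to complex -/
def zc (p : ℝ × ℝ) : ℂ := ⟨p.1, p.2⟩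

def pc (w : ℂ) : ℝ × ℝ := (w.re, w.im)

@[simp] lemma pc_zc (p : ℝ × ℝ) : pc (zc p) = p := rfl
@[simp] lemma zc_pc (w : ℂ) : zc (pc w) = w := rfl

lemma continuous_zc : Continuous zc := by
  have : zc = fun p : ℝ × ℝ => (p.1 : ℂ) + (p.2 : ℂ) * Complex.I := by
    funext p; simp [zc, Complex.ext_iff]
  rw [this]; fun_prop

lemma continuous_pc : Continuous pc := by
  unfold pc; fun_prop

/-- Euclidean norm on ℝ × ℝ -/
def nn (p : ℝ × ℝ) : ℝ := ‖zc p‖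

lemma continuous_nn : Continuous nn := continuous_norm.comp continuous_zc

def th (r : ℝ) : ℝ := 2 * π * (r - 1)

/-- the rotation map on ℂ -/
def Gc (w : ℂ) : ℂ := Complex.exp ((th (‖w‖) : ℝ) * Complex.I) * w

def Gci (w : ℂ) : ℂ := Complex.exp (-((th (‖w‖) : ℝ) * Complex.I)) * w

@[simp] lemma abs_Gc (w : ℂ) : ‖Gc w‖ = ‖w‖ := by
  simp [Gc, norm_mul, Complex.norm_exp_ofReal_mul_I]

@[simp] lemma abs_Gci (w : ℂ) : ‖Gci w‖ = ‖w‖ := by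
  rw [Gci, norm_mul]
  rw [show -((th (‖w‖) : ℝ) * Complex.I) = ((-(th (‖w‖)) : ℝ) : ℂ) * Complex.I by push_cast; ring]
  rw [Complex.norm_exp_ofReal_mul_I, one_mul]

lemma Gci_Gc (w : ℂ) : Gci (Gc w) = w := by
  rw [Gci, abs_Gc, Gc, ← mul_assoc, ← Complex.exp_add]
  simp

lemma Gc_Gci (w : ℂ) : Gc (Gci w) = w := by
  rw [Gc, abs_Gci, Gci, ← mul_assoc, ← Complex.exp_add]
  simp

lemma cont_angle : Continuous (fun w : ℂ => ((2 * π * (‖w‖ - 1) : ℝ) : ℂ) * Complex.I) := by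
  exact (Complex.continuous_ofReal.comp ((continuous_const.mul (continuous_norm.sub continuous_const)))).mul continuous_const

lemma continuous_Gc : Continuous Gc := by
  unfold Gc th
  exact (Complex.continuous_exp.comp cont_angle).mul continuous_id

lemma continuous_Gci : Continuous Gci := by
  unfold Gci th
  exact (Complex.continuous_exp.comp cont_angle.neg).mul continuous_id

lemma Gc_iter (k : ℕ) (w : ℂ) : Gc^[k] w = Complex.exp ((k * th (‖w‖) : ℝ) * Complex.I) * w := by
  induction k with
  | zero => simp
  | succ k ih =>
    rw [Function.iterate_succ_apply', ih, Gc]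
    have habs : ‖Complex.exp ((k * th (‖w‖) : ℝ) * Complex.I) * w‖ = ‖w‖ := by
      rw [norm_mul, Complex.norm_exp_ofReal_mul_I, one_mul]
    rw [habs, ← mul_assoc, ← Complex.exp_add]
    push_cast
    ring_nf



/-- digit coefficient -/
def e (s : ℕ → Bool) (j : ℕ) : ℝ := if s j then 4 else 0

lemma e_nonneg (s j) : 0 ≤ e s j := by unfold e; split <;> norm_num
lemma e_le (s j) : e s j ≤ 4 := by unfold e; split <;> norm_num

/-- the rotation number attached to a pattern `s` of length `n` -/
def q (n : ℕ) (s : ℕ → Bool) : ℝ := ∑ j ∈ Finset.range n, e s j / 8 ^ (n + j + 1)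

lemma q_congr {n : ℕ} {s s' : ℕ → Bool} (h : ∀ j < n, s j = s' j) : q n s = q n s' := by
  unfold q
  refine Finset.sum_congr rfl fun j hj => ?_
  rw [Finset.mem_range] at hj
  unfold e; rw [h j hj]

lemma q_nonneg (n s) : 0 ≤ q n s :=
  Finset.sum_nonneg fun j _ => div_nonneg (e_nonneg s j) (by positivity)

lemma geo_le (m : ℕ) : ∑ k ∈ Finset.range m, ((1:ℝ)/8)^k ≤ 8/7 := by
  rw [geom_sum_eq (by norm_num)]
  have : ((1:ℝ)/8)^m ≥ 0 := by positivity
  have h2 : ((1:ℝ)/8)^m ≤ 1 := pow_le_one₀ (by norm_num) (by norm_num)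
  have h3 : (((1:ℝ)/8)^m - 1)/((1:ℝ)/8 - 1) = (8/7) * (1 - ((1:ℝ)/8)^m) := by ring
  rw [h3]; nlinarith

lemma sum_tail_le (n i m : ℕ) (s : ℕ → Bool) :
    ∑ j ∈ Finset.range m, e s (i + j) / 8 ^ (n + (i + j) + 1) ≤ (8/7) * (4 / 8 ^ (n + i + 1)) := by
  have h1 : ∀ j ∈ Finset.range m, e s (i + j) / 8 ^ (n + (i + j) + 1)
      ≤ (4 / 8 ^ (n + i + 1)) * ((1:ℝ)/8)^j := by
    intro j _
    have hp : (8:ℝ) ^ (n + (i + j) + 1) = 8 ^ (n + i + 1) * 8 ^ j := by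
      rw [← pow_add]; ring_nf
    have hr : 4 / (8:ℝ) ^ (n + i + 1) * ((1:ℝ)/8)^j = 4 / (8 ^ (n+i+1) * 8 ^ j) := by
      rw [div_pow, one_pow]; field_simp
    rw [hp, hr]
    gcongr
    exact e_le s (i+j)
  calc ∑ j ∈ Finset.range m, e s (i + j) / 8 ^ (n + (i + j) + 1)
      ≤ ∑ j ∈ Finset.range m, (4 / 8 ^ (n + i + 1)) * ((1:ℝ)/8)^j := Finset.sum_le_sum h1
    _ = (4 / 8 ^ (n + i + 1)) * ∑ j ∈ Finset.range m, ((1:ℝ)/8)^j := by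
        rw [Finset.mul_sum]
    _ ≤ (4 / 8 ^ (n + i + 1)) * (8/7) := by
        have := geo_le m
        have h0 : (0:ℝ) ≤ 4 / 8 ^ (n + i + 1) := by positivity
        nlinarith
    _ = (8/7) * (4 / 8 ^ (n + i + 1)) := by ring

lemma q_le (n s) : q n s ≤ 1 / 8 ^ n := by
  have h := sum_tail_le n 0 n s
  simp only [Nat.zero_add, Nat.add_zero] at h
  have hq : q n s = ∑ j ∈ Finset.range n, e s (0 + j) / 8 ^ (n + (0 + j) + 1) := by
    unfold q; refine Finset.sum_congr rfl fun j _ => by norm_num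
  rw [hq]
  refine (sum_tail_le n 0 n s).trans ?_
  have h1 : (8:ℝ) ^ (n + 0 + 1) = 8 * 8 ^ n := by rw [Nat.add_zero, pow_succ]; ring
  rw [h1]
  have h2 : (8:ℝ)/7 * (4/(8*8^n)) = (4/7)/8^n := by ring
  rw [h2]
  gcongr <;> norm_num

/-- integer part of the digit expansion -/
def Tnat (i : ℕ) (s : ℕ → Bool) : ℕ := ∑ j ∈ Finset.range i, (if s j then 4 * 8 ^ (i - j - 1) else 0)

lemma tail_le (m : ℕ) (s : ℕ → Bool) (i : ℕ) :
    ∑ j ∈ Finset.range m, e s (i + 1 + j) / 8 ^ (j + 2) ≤ 1/14 := by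
  have h1 : ∀ j ∈ Finset.range m, e s (i + 1 + j) / 8 ^ (j + 2) ≤ (1/16) * ((1:ℝ)/8)^j := by
    intro j _
    have hr : (1/16) * ((1:ℝ)/8)^j = 4 / (64 * 8 ^ j) := by
      rw [div_pow, one_pow]; field_simp; ring
    have hp : (8:ℝ) ^ (j + 2) = 64 * 8 ^ j := by rw [pow_add]; ring
    rw [hr, hp]
    gcongr
    exact e_le _ _
  calc ∑ j ∈ Finset.range m, e s (i + 1 + j) / 8 ^ (j + 2)
      ≤ ∑ j ∈ Finset.range m, (1/16) * ((1:ℝ)/8)^j := Finset.sum_le_sum h1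
    _ = (1/16) * ∑ j ∈ Finset.range m, ((1:ℝ)/8)^j := by rw [Finset.mul_sum]
    _ ≤ (1/16) * (8/7) := by have := geo_le m; nlinarith
    _ = 1/14 := by norm_num

lemma key_frac (n i : ℕ) (hi : i < n) (s : ℕ → Bool) :
    ∃ T : ℕ, ∃ ρ : ℝ, 0 ≤ ρ ∧ ρ ≤ 1/14 ∧
      (8:ℝ) ^ (n + i) * q n s = T + (if s i then 1/2 else 0) + ρ := by
  refine ⟨Tnat i s, ∑ j ∈ Finset.range (n - (i+1)), e s (i + 1 + j) / 8 ^ (j + 2), ?_, ?_, ?_⟩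
  · exact Finset.sum_nonneg fun j _ => div_nonneg (e_nonneg _ _) (by positivity)
  · exact tail_le _ s i
  · unfold q
    rw [Finset.mul_sum]
    have hsplit : Finset.range n = Finset.range (i+1) ∪ Finset.Ico (i+1) n := by
      simp only [Finset.range_eq_Ico]
      rw [Finset.Ico_union_Ico_eq_Ico (Nat.zero_le _) hi]
    rw [hsplit, Finset.sum_union (by
      rw [Finset.range_eq_Ico, Finset.disjoint_left]
      intro a ha hb
      simp only [Finset.mem_Ico] at ha hb
      omega)]
    rw [Finset.sum_range_succ]
    congr 1
    · congr 1
      · unfold Tnat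
        push_cast
        refine Finset.sum_congr rfl fun j hj => ?_
        rw [Finset.mem_range] at hj
        unfold e
        by_cases h : s j
        · simp only [h, if_true]
          have hp : (8:ℝ)^(n+i) = 8^(n+j+1) * 8^(i - j - 1) := by
            rw [← pow_add]
            congr 1
            omega
          rw [hp]
          field_simp
        · simp [h]
      · unfold e
        by_cases h : s i
        · simp only [h, if_true]
          have hp : (8:ℝ)^(n+i+1) = 8^(n+i) * 8 := by rw [pow_succ]
          rw [hp]
          have h8 : (8:ℝ)^(n+i) ≠ 0 := by positivity
          field_simp
          ring
        · simp [h]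
    · rw [Finset.sum_Ico_eq_sum_range]
      refine Finset.sum_congr rfl fun j hj => ?_
      have hp : (8:ℝ)^(n + (i+1+j) + 1) = 8^(n+i) * 8^(j+2) := by
        rw [← pow_add]; congr 1; omega
      rw [hp]
      have h8 : (8:ℝ)^(n+i) ≠ 0 := by positivity
      field_simp

lemma cos_small {ρ : ℝ} (h0 : 0 ≤ ρ) (h14 : ρ ≤ 1/14) : 87/100 ≤ Real.cos (2 * π * ρ) := by
  have hb := Real.one_sub_sq_div_two_le_cos (x := 2 * π * ρ)
  have hπ : π < 3.15 := Real.pi_lt_d2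
  have hπ0 : 0 < π := Real.pi_pos
  have h1 : 0 ≤ 2 * π * ρ := by positivity
  have h2 : 2 * π * ρ ≤ 0.45 := by nlinarith
  nlinarith

lemma cos_pattern (n i : ℕ) (hi : i < n) (s : ℕ → Bool) :
    (s i = false → 87/100 ≤ Real.cos (2 * π * ((8:ℝ)^(n+i) * q n s))) ∧
    (s i = true → Real.cos (2 * π * ((8:ℝ)^(n+i) * q n s)) ≤ -(87/100)) := by
  obtain ⟨T, ρ, h0, h14, heq⟩ := key_frac n i hi s
  constructor
  · intro hf
    rw [hf] at heq
    norm_num at heq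
    have harg : 2 * π * ((8:ℝ)^(n+i) * q n s) = 2 * π * ρ + (T:ℤ) * (2 * π) := by
      rw [heq]; push_cast; ring
    rw [harg, Real.cos_add_int_mul_two_pi]
    exact cos_small h0 h14
  · intro ht
    rw [ht] at heq
    norm_num at heq
    have harg : 2 * π * ((8:ℝ)^(n+i) * q n s) = (2 * π * ρ + π) + (T:ℤ) * (2 * π) := by
      rw [heq]; push_cast; ring
    rw [harg, Real.cos_add_int_mul_two_pi, Real.cos_add_pi]
    have := cos_small h0 h14
    linarith


/-- numerator for periodicity -/
def Pn (n : ℕ) (s : ℕ → Bool) : ℕ := ∑ j ∈ Finset.range n, (if s j then 4 * 8 ^ (n - j - 1) else 0)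

lemma q_mul_denom (n : ℕ) (s : ℕ → Bool) : (8:ℝ) ^ (2*n) * q n s = Pn n s := by
  unfold q Pn
  rw [Finset.mul_sum]
  push_cast
  refine Finset.sum_congr rfl fun j hj => ?_
  rw [Finset.mem_range] at hj
  unfold e
  by_cases h : s j
  · simp only [h, if_true]
    have hp : (8:ℝ)^(2*n) = 8^(n+j+1) * 8^(n - j - 1) := by
      rw [← pow_add]; congr 1; omega
    rw [hp]
    field_simp
  · simp [h]

/-- the set of radii -/
def R : Set ℝ := {r | ∃ n s, r = 1 + q n s}

/-- the compact invariant planar set -/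
def Y : Set (ℝ × ℝ) := {p | nn p ∈ R}

lemma one_mem_R : (1:ℝ) ∈ R := ⟨0, fun _ => false, by simp [q]⟩

lemma R_subset : R ⊆ Set.Icc 1 2 := by
  rintro r ⟨n, s, rfl⟩
  constructor
  · have := q_nonneg n s; linarith
  · have h1 := q_le n s
    have h2 : (1:ℝ) / 8 ^ n ≤ 1 := by
      rw [div_le_one (by positivity)]
      exact one_le_pow₀ (by norm_num)
    linarith

lemma R_closed : IsClosed R := by
  rw [← closure_subset_iff_isClosed]
  intro x hx
  by_contra hxR
  have hxIcc : x ∈ Set.Icc 1 2 := by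
    have : closure R ⊆ Set.Icc 1 2 := closure_minimal R_subset isClosed_Icc
    exact this hx
  have hx1 : 1 < x := by
    rcases lt_or_eq_of_le hxIcc.1 with h | h
    · exact h
    · exact absurd (h ▸ one_mem_R) hxR
  -- choose N with 1/8^N < (x-1)/2
  obtain ⟨N, hN⟩ : ∃ N : ℕ, ((1:ℝ)/8)^N < (x-1)/2 :=
    exists_pow_lt_of_lt_one (by linarith) (by norm_num)
  -- the finite set of radii with n < N
  set F : Set ℝ := ⋃ n ∈ Finset.range N, (fun v : Fin n → Bool =>
      1 + q n (fun j => if h : j < n then v ⟨j, h⟩ else false)) '' Set.univ with hF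
  have hFfin : F.Finite := by
    refine Set.Finite.biUnion (Finset.finite_toSet _) fun n _ => ?_
    exact (Set.finite_univ.image _)
  have hxF : x ∉ F := by
    intro hxmem
    apply hxR
    simp only [hF, Set.mem_iUnion, Set.mem_image] at hxmem
    obtain ⟨n, _, v, _, hv⟩ := hxmem
    exact ⟨n, _, hv.symm⟩
  have hFclosed : IsClosed F := hFfin.isClosed
  obtain ⟨ε, hε, hball⟩ : ∃ ε > 0, Metric.ball x ε ⊆ Fᶜ :=
    Metric.isOpen_iff.mp hFclosed.isOpen_compl x hxF
  have hε' : 0 < min ε ((x-1)/2) := lt_min hε (by linarith)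
  rw [Metric.mem_closure_iff] at hx
  obtain ⟨y, hyR, hdist⟩ := hx (min ε ((x-1)/2)) hε'
  obtain ⟨n, s, rfl⟩ := hyR
  by_cases hn : n < N
  · have hyF : 1 + q n s ∈ F := by
      simp only [hF, Set.mem_iUnion, Set.mem_image]
      refine ⟨n, Finset.mem_range.mpr hn, fun j : Fin n => s j.1, Set.mem_univ _, ?_⟩
      congr 1
      refine q_congr fun j hj => ?_
      simp [hj]
    have : 1 + q n s ∈ Metric.ball x ε := by
      rw [Metric.mem_ball, dist_comm]
      exact hdist.trans_le (min_le_left _ _)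
    exact hball this hyF
  · push_neg at hn
    have hq : q n s ≤ ((1:ℝ)/8)^N := by
      refine (q_le n s).trans ?_
      calc (1:ℝ)/8^n = (1/8)^n := by rw [div_pow, one_pow]
        _ ≤ ((1:ℝ)/8)^N := pow_le_pow_of_le_one (by norm_num) (by norm_num) hn
    have : dist x (1 + q n s) ≥ (x-1)/2 := by
      rw [Real.dist_eq, abs_of_nonneg (by nlinarith [q_nonneg n s])]
      nlinarith
    have := hdist.trans_le (min_le_right _ _)
    linarith

lemma Y_compact : IsCompact Y := by
  have hclosed : IsClosed Y := R_closed.preimage continuous_nn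
  have hbdd : Bornology.IsBounded Y := by
    rw [Metric.isBounded_iff_subset_closedBall (0, 0)]
    refine ⟨2, fun p hp => ?_⟩
    have h2 := (R_subset hp).2
    simp only [Metric.mem_closedBall]
    have hre : |p.1| ≤ nn p := by
      have := Complex.abs_re_le_norm (zc p)
      simpa [zc, nn] using this
    have him : |p.2| ≤ nn p := by
      have := Complex.abs_im_le_norm (zc p)
      simpa [zc, nn] using this
    rw [Prod.dist_eq]
    simp only [Real.dist_eq, sub_zero]
    exact max_le (by linarith) (by linarith)
  exact Metric.isCompact_of_isClosed_isBounded hclosed hbdd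

lemma nn_ge_one {p : ℝ × ℝ} (hp : p ∈ Y) : 1 ≤ nn p := (R_subset hp).1

lemma G_mem {p : ℝ × ℝ} (hp : p ∈ Y) : pc (Gc (zc p)) ∈ Y := by
  have : nn (pc (Gc (zc p))) = nn p := by unfold nn; rw [zc_pc, abs_Gc]
  unfold Y at *; rw [Set.mem_setOf_eq, this]; exact hp

lemma Gi_mem {p : ℝ × ℝ} (hp : p ∈ Y) : pc (Gci (zc p)) ∈ Y := by
  have : nn (pc (Gci (zc p))) = nn p := by unfold nn; rw [zc_pc, abs_Gci]
  unfold Y at *; rw [Set.mem_setOf_eq, this]; exact hp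

/-- the pointwise periodic homeomorphism -/
def gmap : ↥Y ≃ₜ ↥Y where
  toFun x := ⟨pc (Gc (zc x.1)), G_mem x.2⟩
  invFun x := ⟨pc (Gci (zc x.1)), Gi_mem x.2⟩
  left_inv x := Subtype.ext (by simp [Gci_Gc])
  right_inv x := Subtype.ext (by simp [Gc_Gci])
  continuous_toFun := Continuous.subtype_mk
    (continuous_pc.comp (continuous_Gc.comp (continuous_zc.comp continuous_subtype_val))) _
  continuous_invFun := Continuous.subtype_mk
    (continuous_pc.comp (continuous_Gci.comp (continuous_zc.comp continuous_subtype_val))) _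

lemma gmap_iter_val (k : ℕ) (x : ↥Y) : ((⇑gmap)^[k] x).1 = pc (Gc^[k] (zc x.1)) := by
  induction k with
  | zero => simp
  | succ k ih =>
    rw [Function.iterate_succ_apply', Function.iterate_succ_apply']
    show pc (Gc (zc ((⇑gmap)^[k] x).1)) = _
    rw [ih, zc_pc]

lemma gmap_iter_val' (k : ℕ) (x : ↥Y) :
    ((⇑gmap)^[k] x).1 = pc (Complex.exp (((k : ℝ) * th (nn x.1) : ℝ) * Complex.I) * zc x.1) := by
  rw [gmap_iter_val, Gc_iter]; rfl

lemma nn_iter (k : ℕ) (x : ↥Y) : nn ((⇑gmap)^[k] x).1 = nn x.1 := by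
  rw [gmap_iter_val]
  unfold nn
  rw [zc_pc]
  induction k with
  | zero => simp
  | succ k ih => rw [Function.iterate_succ_apply', abs_Gc]; exact ih

lemma gmap_periodic (x : ↥Y) : ∃ m : ℕ, 1 ≤ m ∧ (⇑gmap)^[m] x = x := by
  obtain ⟨n, s, hns⟩ := x.2
  refine ⟨8 ^ (2 * n), Nat.one_le_iff_ne_zero.mpr (by positivity), ?_⟩
  apply Subtype.ext
  rw [gmap_iter_val' (8 ^ (2 * n)) x]
  have hθ : ((8 ^ (2 * n) : ℕ) : ℝ) * th (nn x.1) = (Pn n s : ℝ) * (2 * π) := by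
    rw [hns]
    unfold th
    push_cast
    rw [show (1:ℝ) + q n s - 1 = q n s by ring]
    rw [show (8:ℝ) ^ (2*n) * (2 * π * q n s) = 2 * π * ((8:ℝ)^(2*n) * q n s) by ring,
      q_mul_denom]
    ring
  rw [hθ]
  have : ((((Pn n s : ℝ) * (2 * π) : ℝ)) : ℂ) * Complex.I = (Pn n s : ℤ) * (2 * ↑π * Complex.I) := by
    push_cast
    ring
  rw [this, Complex.exp_int_mul_two_pi_mul_I, one_mul, pc_zc]

lemma abs_zc_sub_le (u v : ℝ × ℝ) : ‖zc u - zc v‖ ≤ 2 * dist u v := by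
  have h1 : ‖zc u - zc v‖ ≤ |u.1 - v.1| + |u.2 - v.2| := by
    have := Complex.norm_le_abs_re_add_abs_im (zc u - zc v)
    simpa [zc, Complex.sub_re, Complex.sub_im] using this
  rw [Prod.dist_eq]
  simp only [Real.dist_eq]
  have h2 : |u.1 - v.1| ≤ max |u.1 - v.1| |u.2 - v.2| := le_max_left _ _
  have h3 : |u.2 - v.2| ≤ max |u.1 - v.1| |u.2 - v.2| := le_max_right _ _
  linarith

lemma dist_bdd (u v : ↥Y) : dist u v ≤ 8 := by
  rw [Subtype.dist_eq, Prod.dist_eq]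
  have h1 := (R_subset u.2).2
  have h2 := (R_subset v.2).2
  have hre : ∀ w : ↥Y, |w.1.1| ≤ 2 := by
    intro w
    have := Complex.abs_re_le_norm (zc w.1)
    have h := (R_subset w.2).2
    simp only [zc] at this
    calc |w.1.1| ≤ nn w.1 := this
      _ ≤ 2 := h
  have him : ∀ w : ↥Y, |w.1.2| ≤ 2 := by
    intro w
    have := Complex.abs_im_le_norm (zc w.1)
    have h := (R_subset w.2).2
    simp only [zc] at this
    calc |w.1.2| ≤ nn w.1 := this
      _ ≤ 2 := h
  simp only [Real.dist_eq]
  have := hre u; have := hre v; have := him u; have := him v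
  apply max_le
  · calc |u.1.1 - v.1.1| ≤ |u.1.1| + |v.1.1| := abs_sub _ _
      _ ≤ 8 := by linarith [hre u, hre v]
  · calc |u.1.2 - v.1.2| ≤ |u.1.2| + |v.1.2| := abs_sub _ _
      _ ≤ 8 := by linarith [him u, him v]

lemma gmap_distal (x y : ↥Y)
    (h : Filter.liminf (fun k : ℕ => dist ((⇑gmap)^[k] x) ((⇑gmap)^[k] y)) Filter.atTop = 0) :
    x = y := by
  set u : ℕ → ℝ := fun k => dist ((⇑gmap)^[k] x) ((⇑gmap)^[k] y) with hu
  have hbd : ∀ k, u k ≤ 8 := fun k => dist_bdd _ _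
  have hcb : Filter.IsCoboundedUnder (· ≥ ·) Filter.atTop u :=
    Filter.isCoboundedUnder_ge_of_le Filter.atTop hbd
  have hlb : ∀ c : ℝ, (∀ k, c ≤ u k) → c ≤ 0 := by
    intro c hc
    rw [← h]
    exact Filter.le_liminf_of_le hcb (Filter.Eventually.of_forall hc)
  -- step 1 : same radius
  have hrad : nn x.1 = nn y.1 := by
    have hstep : ∀ k, |nn x.1 - nn y.1| / 2 ≤ u k := by
      intro k
      have h1 : |nn x.1 - nn y.1| = |nn ((⇑gmap)^[k] x).1 - nn ((⇑gmap)^[k] y).1| := by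
        rw [nn_iter, nn_iter]
      have h2 : |nn ((⇑gmap)^[k] x).1 - nn ((⇑gmap)^[k] y).1|
          ≤ ‖zc ((⇑gmap)^[k] x).1 - zc ((⇑gmap)^[k] y).1‖ := by
        have := abs_norm_sub_norm_le (zc ((⇑gmap)^[k] x).1) (zc ((⇑gmap)^[k] y).1)
        simpa [nn] using this
      have h3 := abs_zc_sub_le ((⇑gmap)^[k] x).1 ((⇑gmap)^[k] y).1
      have h4 : dist ((⇑gmap)^[k] x).1 ((⇑gmap)^[k] y).1 = u k := (Subtype.dist_eq _ _).symm
      rw [h4] at h3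
      rw [h1]
      linarith
    have := hlb _ (fun k => hstep k)
    have habs : 0 ≤ |nn x.1 - nn y.1| := abs_nonneg _
    have : |nn x.1 - nn y.1| = 0 := by linarith
    exact sub_eq_zero.mp (abs_eq_zero.mp this)
  -- step 2 : same point
  have hsame : ∀ k, zc ((⇑gmap)^[k] x).1 - zc ((⇑gmap)^[k] y).1
      = Complex.exp (((k : ℝ) * th (nn x.1) : ℝ) * Complex.I) * (zc x.1 - zc y.1) := by
    intro k
    rw [gmap_iter_val' k x, gmap_iter_val' k y, zc_pc, zc_pc, hrad]
    ring
  have hstep2 : ∀ k, ‖zc x.1 - zc y.1‖ / 2 ≤ u k := by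
    intro k
    have h3 := abs_zc_sub_le ((⇑gmap)^[k] x).1 ((⇑gmap)^[k] y).1
    rw [hsame k, norm_mul, Complex.norm_exp_ofReal_mul_I, one_mul] at h3
    have h4 : dist ((⇑gmap)^[k] x).1 ((⇑gmap)^[k] y).1 = u k := (Subtype.dist_eq _ _).symm
    rw [h4] at h3
    linarith
  have := hlb _ hstep2
  have habs : 0 ≤ ‖zc x.1 - zc y.1‖ := norm_nonneg _
  have hz : zc x.1 - zc y.1 = 0 := by
    have : ‖zc x.1 - zc y.1‖ = 0 := by linarith
    exact norm_eq_zero.mp this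
  have : zc x.1 = zc y.1 := sub_eq_zero.mp hz
  have : x.1 = y.1 := by
    have h1 := congrArg pc this
    simpa using h1
  exact Subtype.ext this

def SU : Set ↥Y := {x | nn x.1 < 2 * x.1.1}
def SV : Set ↥Y := {x | nn x.1 < -(2 * x.1.1)}
def SW1 : Set ↥Y := {x | nn x.1 < 2 * x.1.2}
def SW2 : Set ↥Y := {x | nn x.1 < -(2 * x.1.2)}

open Classical in
/-- the separating open cover -/
def cov : Finset (Set ↥Y) := {SU, SV, SW1, SW2}

def KU : Set ↥Y := {x | 87/100 * nn x.1 ≤ x.1.1}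
def KV : Set ↥Y := {x | x.1.1 ≤ -(87/100 * nn x.1)}

lemma nn_sq (p : ℝ × ℝ) : nn p ^ 2 = p.1^2 + p.2^2 := by
  unfold nn
  rw [Complex.sq_norm]
  show Complex.normSq ⟨p.1, p.2⟩ = _
  rw [Complex.normSq_mk]
  ring

lemma isOpen_SU : IsOpen SU := by
  have : SU = Subtype.val ⁻¹' {p : ℝ × ℝ | nn p < 2 * p.1} := rfl
  rw [this]
  exact (isOpen_lt continuous_nn (continuous_const.mul continuous_fst)).preimage
    continuous_subtype_val
lemma isOpen_SV : IsOpen SV := by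
  have : SV = Subtype.val ⁻¹' {p : ℝ × ℝ | nn p < -(2 * p.1)} := rfl
  rw [this]
  exact (isOpen_lt continuous_nn (continuous_const.mul continuous_fst).neg).preimage
    continuous_subtype_val
lemma isOpen_SW1 : IsOpen SW1 := by
  have : SW1 = Subtype.val ⁻¹' {p : ℝ × ℝ | nn p < 2 * p.2} := rfl
  rw [this]
  exact (isOpen_lt continuous_nn (continuous_const.mul continuous_snd)).preimage
    continuous_subtype_val
lemma isOpen_SW2 : IsOpen SW2 := by
  have : SW2 = Subtype.val ⁻¹' {p : ℝ × ℝ | nn p < -(2 * p.2)} := rfl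
  rw [this]
  exact (isOpen_lt continuous_nn (continuous_const.mul continuous_snd).neg).preimage
    continuous_subtype_val

lemma cov_mem_cases (x : ↥Y) : x ∈ SU ∨ x ∈ SV ∨ x ∈ SW1 ∨ x ∈ SW2 := by
  by_contra hcon
  push_neg at hcon
  obtain ⟨h1, h2, h3, h4⟩ := hcon
  simp only [SU, SV, SW1, SW2, Set.mem_setOf_eq, not_lt] at h1 h2 h3 h4
  have hnn := nn_ge_one x.2
  have hsq := nn_sq x.1
  nlinarith

lemma cov_sep {A : Set ↥Y} (hA : A ∈ cov) {u v : ↥Y} (hu : u ∈ A) (hv : v ∈ A)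
    (hKu : u ∈ KU) (hKv : v ∈ KV) : False := by
  have hnu := nn_ge_one u.2
  have hnv := nn_ge_one v.2
  have hsqu := nn_sq u.1
  have hsqv := nn_sq v.1
  simp only [KU, KV, Set.mem_setOf_eq] at hKu hKv
  simp only [cov, Finset.mem_insert, Finset.mem_singleton] at hA
  rcases hA with rfl | rfl | rfl | rfl <;>
    simp only [SU, SV, SW1, SW2, Set.mem_setOf_eq] at hu hv <;> nlinarith

/-- extension of a finite pattern -/
def pext (n : ℕ) (s : Fin n → Bool) : ℕ → Bool := fun j => if h : j < n then s ⟨j, h⟩ else false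

lemma ppt_mem (n : ℕ) (s : Fin n → Bool) : ((1 + q n (pext n s), 0) : ℝ × ℝ) ∈ Y := by
  have hq := q_nonneg n (pext n s)
  have : nn (1 + q n (pext n s), 0) = 1 + q n (pext n s) := by
    unfold nn
    show ‖(⟨1 + q n (pext n s), 0⟩ : ℂ)‖ = _
    rw [show (⟨1 + q n (pext n s), 0⟩ : ℂ) = ((1 + q n (pext n s) : ℝ) : ℂ) from rfl,
      Complex.norm_real, Real.norm_eq_abs]
    exact abs_of_nonneg (by linarith)
  show nn _ ∈ R
  rw [this]
  exact ⟨n, pext n s, rfl⟩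

/-- the pattern point -/
def ppt (n : ℕ) (s : Fin n → Bool) : ↥Y := ⟨(1 + q n (pext n s), 0), ppt_mem n s⟩

lemma nn_ppt (n : ℕ) (s : Fin n → Bool) : nn (ppt n s).1 = 1 + q n (pext n s) := by
  have := ppt_mem n s
  have hq := q_nonneg n (pext n s)
  unfold nn
  show ‖(⟨1 + q n (pext n s), 0⟩ : ℂ)‖ = _
  rw [show (⟨1 + q n (pext n s), 0⟩ : ℂ) = ((1 + q n (pext n s) : ℝ) : ℂ) from rfl,
    Complex.norm_real, Real.norm_eq_abs]
  exact abs_of_nonneg (by linarith)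

lemma ppt_iter_val (n : ℕ) (s : Fin n → Bool) (i : ℕ) :
    ((⇑gmap)^[8 ^ (n + i)] (ppt n s)).1.1
      = (1 + q n (pext n s)) * Real.cos (2 * π * ((8:ℝ) ^ (n + i) * q n (pext n s))) := by
  rw [gmap_iter_val']
  rw [nn_ppt]
  unfold th
  set qq := q n (pext n s)
  have harg : ((8 ^ (n + i) : ℕ) : ℝ) * (2 * π * (1 + qq - 1)) = 2 * π * ((8:ℝ) ^ (n + i) * qq) := by
    push_cast
    ring
  rw [harg]
  have hz : zc (ppt n s).1 = ((1 + qq : ℝ) : ℂ) := rfl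
  rw [hz]
  show (Complex.exp _ * _).re = _
  rw [Complex.mul_re, Complex.exp_ofReal_mul_I_re, Complex.exp_ofReal_mul_I_im]
  simp [Complex.ofReal_re, Complex.ofReal_im]
  ring

lemma ppt_iter_mem (n : ℕ) (s : Fin n → Bool) (i : Fin n) :
    (s i = false → (⇑gmap)^[8 ^ (n + i.1)] (ppt n s) ∈ KU) ∧
    (s i = true → (⇑gmap)^[8 ^ (n + i.1)] (ppt n s) ∈ KV) := by
  have hcp := cos_pattern n i.1 i.2 (pext n s)
  have hpe : pext n s i.1 = s i := by
    unfold pext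
    rw [dif_pos i.2]
  have hval := ppt_iter_val n s i.1
  have hnn : nn ((⇑gmap)^[8 ^ (n + i.1)] (ppt n s)).1 = 1 + q n (pext n s) := by
    rw [nn_iter, nn_ppt]
  have hq := q_nonneg n (pext n s)
  constructor
  · intro hf
    have hcos := hcp.1 (by rw [hpe, hf])
    show (87:ℝ)/100 * nn _ ≤ _
    rw [hnn, hval]
    nlinarith
  · intro ht
    have hcos := hcp.2 (by rw [hpe, ht])
    show _ ≤ -((87:ℝ)/100 * nn _)
    rw [hnn, hval]
    nlinarith

def el4 : Fin 4 → Set ↥Y := ![SU, SV, SW1, SW2]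

lemma el4_mem (k : Fin 4) : el4 k ∈ cov := by
  classical
  fin_cases k <;> simp [el4, cov]

/-- the covering-count set is nonempty -/
lemma count_nonempty (M : ℕ) :
    { m | ∃ c : Fin m → Fin M → Set ↥Y, (∀ j i, c j i ∈ cov) ∧
      Set.univ ⊆ ⋃ j, ⋂ i, (⇑gmap)^[(fun i : ℕ => 8 ^ i) i.1] ⁻¹' c j i }.Nonempty := by
  classical
  have hcard : Fintype.card (Fin M → Fin 4) = 4 ^ M := by simp
  let e4 : (Fin M → Fin 4) ≃ Fin (4 ^ M) := Fintype.equivFinOfCardEq hcard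
  refine ⟨4 ^ M, fun j i => el4 (e4.symm j i), fun j i => el4_mem _, ?_⟩
  intro x _
  have hsel : ∀ i : Fin M, ∃ k : Fin 4, (⇑gmap)^[8 ^ i.1] x ∈ el4 k := by
    intro i
    rcases cov_mem_cases ((⇑gmap)^[8 ^ i.1] x) with h | h | h | h
    · exact ⟨0, h⟩
    · exact ⟨1, h⟩
    · exact ⟨2, h⟩
    · exact ⟨3, h⟩
  choose k hk using hsel
  rw [Set.mem_iUnion]
  refine ⟨e4 k, ?_⟩
  rw [Set.mem_iInter]
  intro i
  show (⇑gmap)^[8 ^ i.1] x ∈ el4 (e4.symm (e4 k) i)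
  rw [Equiv.symm_apply_apply]
  exact hk i

lemma count_elem_lb (M m : ℕ) (hM : 2 ≤ M)
    (hmem : m ∈ { m | ∃ c : Fin m → Fin M → Set ↥Y, (∀ j i, c j i ∈ cov) ∧
      Set.univ ⊆ ⋃ j, ⋂ i, (⇑gmap)^[(fun i : ℕ => 8 ^ i) i.1] ⁻¹' c j i }) :
    2 ^ (M / 2) ≤ m := by
  classical
  obtain ⟨c, hc1, hc2⟩ := hmem
  set n := M / 2 with hn
  have h2n : 2 * n ≤ M := Nat.mul_div_le M 2 |>.trans_eq (by ring_nf) |>.trans_eq rfl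
  have hn1 : 1 ≤ n := by omega
  have hsel : ∀ s : Fin n → Bool, ∃ j : Fin m,
      ppt n s ∈ ⋂ i, (⇑gmap)^[(fun i : ℕ => 8 ^ i) i.1] ⁻¹' c j i := by
    intro s
    have := hc2 (Set.mem_univ (ppt n s))
    rwa [Set.mem_iUnion] at this
  choose J hJ using hsel
  have haux : ∀ s s' : Fin n → Bool, ∀ i₀ : Fin n, J s = J s' →
      s i₀ = true → s' i₀ = false → False := by
    intro s s' i₀ hJeq hs hs'
    have hi : n + i₀.1 < M := by have := i₀.2; omega
    set iM : Fin M := ⟨n + i₀.1, hi⟩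
    have h1 : ppt n s ∈ (⇑gmap)^[8 ^ (n + i₀.1)] ⁻¹' c (J s) iM := by
      have := Set.mem_iInter.mp (hJ s) iM
      exact this
    have h2 : ppt n s' ∈ (⇑gmap)^[8 ^ (n + i₀.1)] ⁻¹' c (J s') iM := by
      have := Set.mem_iInter.mp (hJ s') iM
      exact this
    rw [hJeq] at h1
    have hKV : (⇑gmap)^[8 ^ (n + i₀.1)] (ppt n s) ∈ KV := (ppt_iter_mem n s i₀).2 hs
    have hKU : (⇑gmap)^[8 ^ (n + i₀.1)] (ppt n s') ∈ KU := (ppt_iter_mem n s' i₀).1 hs'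
    exact cov_sep (hc1 (J s') iM) h2 h1 hKU hKV
  have hinj : Function.Injective J := by
    intro s s' hJeq
    by_contra hne
    obtain ⟨i₀, hi₀⟩ := Function.ne_iff.mp hne
    cases hsi : s i₀ <;> cases hsi' : s' i₀
    · rw [hsi, hsi'] at hi₀; exact hi₀ rfl
    · exact haux s' s i₀ hJeq.symm hsi' hsi
    · exact haux s s' i₀ hJeq hsi hsi'
    · rw [hsi, hsi'] at hi₀; exact hi₀ rfl
  have := Fintype.card_le_of_injective J hinj
  simpa using this

lemma scc_lb (M : ℕ) (hM : 2 ≤ M) :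
    2 ^ (M / 2) ≤ seqCoverCountOn (⇑gmap) Set.univ (fun i => 8 ^ i) cov M := by
  unfold seqCoverCountOn
  exact count_elem_lb M _ hM (Nat.sInf_mem (count_nonempty M))

lemma cov_isOpenCover : IsOpenCoverOn (Set.univ : Set ↥Y) cov := by
  classical
  constructor
  · intro U hU
    simp only [cov, Finset.mem_insert, Finset.mem_singleton] at hU
    rcases hU with rfl | rfl | rfl | rfl
    exacts [isOpen_SU, isOpen_SV, isOpen_SW1, isOpen_SW2]
  · intro x _
    rcases cov_mem_cases x with h | h | h | h
    · exact ⟨SU, by simp [cov], h⟩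
    · exact ⟨SV, by simp [cov], h⟩
    · exact ⟨SW1, by simp [cov], h⟩
    · exact ⟨SW2, by simp [cov], h⟩

lemma ent_pos : 0 < supSeqEntropy (⇑gmap) := by
  set a : ℕ → ℕ := fun i => 8 ^ i with ha
  have hsm : StrictMono a := fun i j h => Nat.pow_lt_pow_right (by norm_num) h
  have ha0 : 1 ≤ a 0 := by simp [ha]
  set c0 : ℝ≥0∞ := ENNReal.ofReal (Real.log 2 / 4) with hc0
  have hc0pos : 0 < c0 := by
    rw [hc0, ENNReal.ofReal_pos]
    have := Real.log_pos (by norm_num : (1:ℝ) < 2)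
    linarith
  have hlim : c0 ≤ Filter.limsup
      (fun M : ℕ => ENNReal.ofReal
        (Real.log (seqCoverCountOn (⇑gmap) Set.univ a cov M) / M)) Filter.atTop := by
    apply Filter.le_limsup_of_frequently_le'
    apply Filter.Eventually.frequently
    filter_upwards [Filter.eventually_ge_atTop 2] with M hM
    set N := seqCoverCountOn (⇑gmap) Set.univ a cov M
    have hN : 2 ^ (M / 2) ≤ N := scc_lb M hM
    rw [hc0]
    apply ENNReal.ofReal_le_ofReal
    have hNpos : (0:ℝ) < 2 ^ (M / 2) := by positivity
    have hcast : ((2:ℝ)) ^ (M / 2) ≤ (N : ℝ) := by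
      have : ((2 ^ (M / 2) : ℕ) : ℝ) ≤ (N : ℝ) := Nat.cast_le.mpr hN
      push_cast at this
      exact this
    have hlog : (M / 2 : ℕ) * Real.log 2 ≤ Real.log N := by
      have hlp : Real.log ((2:ℝ) ^ (M / 2)) = (M / 2 : ℕ) * Real.log 2 := Real.log_pow _ _
      rw [← hlp]
      exact Real.log_le_log hNpos hcast
    have hMpos : (0:ℝ) < M := by positivity
    rw [div_le_div_iff₀ (by norm_num) hMpos]
    have hfloor : (M : ℝ) ≤ 4 * ((M / 2 : ℕ) : ℝ) := by
      have : M ≤ 4 * (M / 2) := by omega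
      calc (M:ℝ) ≤ ((4 * (M / 2) : ℕ) : ℝ) := Nat.cast_le.mpr this
        _ = 4 * ((M / 2 : ℕ) : ℝ) := by push_cast; ring
    have hlog2 : 0 < Real.log 2 := Real.log_pos (by norm_num)
    nlinarith
  have h1 : Filter.limsup
      (fun M : ℕ => ENNReal.ofReal
        (Real.log (seqCoverCountOn (⇑gmap) Set.univ a cov M) / M)) Filter.atTop
      ≤ seqEntropyOn (⇑gmap) Set.univ a := by
    unfold seqEntropyOn
    exact le_iSup_of_le cov (le_iSup_of_le cov_isOpenCover le_rfl)
  have h2 : seqEntropyOn (⇑gmap) Set.univ a ≤ supSeqEntropy (⇑gmap) := by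
    unfold supSeqEntropy supSeqEntropyOn
    exact le_iSup_of_le a (le_iSup_of_le hsm (le_iSup_of_le ha0 le_rfl))
  exact hc0pos.trans_le (hlim.trans (h1.trans h2))

end SEaux

/-- There is a compact subset `Y ⊆ ℝ²` and a homeomorphism `g : Y → Y`
which is pointwise periodic (hence `(Y, g)` is distal) and has `h_∞(g) > 0`. -/
theorem exists_pointwise_periodic_homeo_positive_seqEntropy :
    ∃ Y : Set (ℝ × ℝ), IsCompact Y ∧ ∃ g : Y ≃ₜ Y,
      (∀ x : Y, ∃ n : ℕ, 1 ≤ n ∧ (⇑g)^[n] x = x) ∧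
      (∀ x y : Y,
        Filter.liminf (fun n : ℕ => dist ((⇑g)^[n] x) ((⇑g)^[n] y)) Filter.atTop = 0 → x = y) ∧
      0 < supSeqEntropy (⇑g) := by
  refine ⟨SEaux.Y, SEaux.Y_compact, SEaux.gmap, ?_, ?_, SEaux.ent_pos⟩
  · intro x
    obtain ⟨m, hm, hfix⟩ := SEaux.gmap_periodic x
    exact ⟨m, hm, hfix⟩
  · exact SEaux.gmap_distal
end SEaux
end
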